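/- Let G be a finite multigraph and let S and T be disjoint subsets of V(G), with R = V(G) − S − T. Then the number q(S,T) of components Q of G−S−T with ‖V(Q),T‖ odd has the same parity as d_{G−S}(T). -/

import Mathlib

open scoped Classical
noncomputable section

structure Multigraph (V : Type) (E : Type) where
  inc : E → Sym2 V

namespace Multigraph

variable {V E : Type}

/-- The number of times vertex `v` occurs as an endpoint of the unordered pair `s`
(a loop at `v` counts twice). -/
def endCount (v : V) (s : Sym2 V) : ℕ :=
  Sym2.lift ⟨fun a b => (if a = v then 1 else 0) + (if b = v then 1 else 0),
    fun _ _ => add_comm _ _⟩ s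

/-- The degree of a vertex in a multigraph (a loop contributes 2). -/
def degree [Fintype E] (G : Multigraph V E) (v : V) : ℕ :=
  ∑ e : E, endCount v (G.inc e)

/-- `G` has a spanning `ℓ`-regular subgraph (a set of edges giving each vertex degree `ℓ`). -/
def HasFactor [Fintype E] (G : Multigraph V E) (ℓ : ℕ) : Prop :=
  ∃ F : Finset E, ∀ v : V, ∑ e ∈ F, endCount v (G.inc e) = ℓ

/-- One step along an edge not in `A`. -/
def Step (G : Multigraph V E) (A : Set E) (x y : V) : Prop :=
  ∃ e : E, e ∉ A ∧ G.inc e = s(x, y)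

/-- The number of connected components of `G` after deleting the edges in `A`. -/
def numComponents (G : Multigraph V E) (A : Set E) : ℕ :=
  Nat.card (Quot (G.Step A))

/-- An edge is a cut-edge if deleting it increases the number of components. -/
def IsCutEdge (G : Multigraph V E) (e : E) : Prop :=
  G.numComponents ∅ < G.numComponents {e}

/-- The number of cut-edges of `G`. -/
def cutEdgeCount (G : Multigraph V E) : ℕ :=
  Nat.card {e : E // G.IsCutEdge e}

/-- `‖A,B‖`: the number of edges with one endpoint in `A` and the other in `B`
(for disjoint `A` and `B`). -/
def edgesBetween (G : Multigraph V E) (A B : Set V) : ℕ :=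
  Nat.card {e : E // ∃ a ∈ A, ∃ b ∈ B, G.inc e = s(a, b)}

/-- The degree of `v` in `G − S` (only edges with no endpoint in `S` count). -/
def degreeAvoid [Fintype E] (G : Multigraph V E) (S : Set V) (v : V) : ℕ :=
  ∑ e : E, if ∀ u ∈ S, ¬ u ∈ G.inc e then endCount v (G.inc e) else 0

/-- `d_{G−S}(T)`: the sum over `v ∈ T` of the degree of `v` in `G − S`. -/
def degSumAvoid [Fintype V] [Fintype E] (G : Multigraph V E) (S T : Set V) : ℕ :=
  ∑ v : V, if v ∈ T then G.degreeAvoid S v else 0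

/-- One step inside the vertex set `R`. -/
def StepIn (G : Multigraph V E) (R : Set V) (x y : V) : Prop :=
  x ∈ R ∧ y ∈ R ∧ ∃ e : E, G.inc e = s(x, y)

/-- Reachability within the vertex set `R`. -/
def ReachIn (G : Multigraph V E) (R : Set V) : V → V → Prop :=
  Relation.ReflTransGen (G.StepIn R)

/-- The component of `v` in the submultigraph induced by `R`. -/
def componentIn (G : Multigraph V E) (R : Set V) (v : V) : Set V :=
  {w | G.ReachIn R v w}

/-- `C` is (the vertex set of) a component of the submultigraph induced by `R`. -/
def IsCompOf (G : Multigraph V E) (R : Set V) (C : Set V) : Prop :=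
  ∃ v ∈ R, C = G.componentIn R v

/-- `q(S,T)`: the number of components `Q` of `G − S − T` with `‖V(Q),T‖` odd. -/
def oddComps (G : Multigraph V E) (S T : Set V) : ℕ :=
  Nat.card {C : Set V // G.IsCompOf ((S ∪ T)ᶜ) C ∧ Odd (G.edgesBetween C T)}

-- ## Auxiliary lemmas

lemma filter_inst {α : Type*} (p : α → Prop) (h1 h2 : DecidablePred p) (s : Finset α) :
    @Finset.filter _ p h1 s = @Finset.filter _ p h2 s := by
  cases Subsingleton.elim h1 h2; rfl

lemma ite_inst {α : Sort*} (p : Prop) (h1 h2 : Decidable p) (a b : α) :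
    @ite _ p h1 a b = @ite _ p h2 a b := by
  cases Subsingleton.elim h1 h2; rfl


lemma stepIn_symm (G : Multigraph V E) (R : Set V) : Symmetric (G.StepIn R) := by
  rintro x y ⟨hx, hy, e, he⟩
  exact ⟨hy, hx, e, by rw [he, Sym2.eq_swap]⟩

lemma reachIn_symm (G : Multigraph V E) (R : Set V) : Symmetric (G.ReachIn R) :=
  fun _ _ h => (@Relation.ReflTransGen.stdSymm _ _ ⟨G.stepIn_symm R⟩).symm _ _ h

lemma mem_of_reachIn {G : Multigraph V E} {R : Set V} {v w : V} (hv : v ∈ R)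
    (h : G.ReachIn R v w) : w ∈ R := by
  induction h with
  | refl => exact hv
  | tail _ h2 _ => exact h2.2.1

lemma componentIn_eq_of_mem {G : Multigraph V E} {R : Set V} {v a : V}
    (h : a ∈ G.componentIn R v) : G.componentIn R a = G.componentIn R v := by
  ext w
  exact ⟨fun hw => Relation.ReflTransGen.trans h hw,
    fun hw => Relation.ReflTransGen.trans (G.reachIn_symm R h) hw⟩

lemma endpoint_unique {S T : Set V} {a b a' b' : V}
    (_ha : a ∈ (S ∪ T)ᶜ) (_hb : b ∈ T) (ha' : a' ∈ (S ∪ T)ᶜ) (hb' : b' ∈ T)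
    (h : s(a, b) = s(a', b')) : a = a' ∧ b = b' := by
  rcases Sym2.eq_iff.mp h with ⟨h1, h2⟩ | ⟨h1, h2⟩
  · exact ⟨h1, h2⟩
  · exact absurd (Or.inr (h1 ▸ hb')) _ha

lemma edgesBetween_eq_card [Fintype E] (G : Multigraph V E) (A B : Set V) :
    G.edgesBetween A B
      = (Finset.univ.filter (fun e => ∃ a ∈ A, ∃ b ∈ B, G.inc e = s(a, b))).card := by
  rw [edgesBetween, Nat.card_eq_fintype_card, Fintype.card_subtype]

lemma sum_ite_mem [Fintype V] (T : Set V) (a : V) :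
    ∑ v : V, (if v ∈ T then (if a = v then 1 else 0) else 0)
      = (if a ∈ T then (1 : ℕ) else 0) := by
  have h : ∀ v : V, (if v ∈ T then (if a = v then 1 else 0) else 0)
      = (if a = v then (if v ∈ T then (1 : ℕ) else 0) else 0) := by
    intro v; split_ifs <;> rfl
  simp_rw [h, Finset.sum_ite_eq, Finset.mem_univ, if_true]

lemma edge_contrib [Fintype V] {S T : Set V} (hST : Disjoint S T) (p : Sym2 V) :
    (((if ∀ u ∈ S, ¬ u ∈ p then ∑ v : V, (if v ∈ T then endCount v p else 0) else 0 : ℕ)) : ZMod 2)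
      = ((if ∃ a ∈ (S ∪ T)ᶜ, ∃ b ∈ T, p = s(a, b) then 1 else 0 : ℕ) : ZMod 2) := by
  induction p using Sym2.ind with
  | _ a b =>
    have hsum : ∑ v : V, (if v ∈ T then endCount v s(a, b) else 0)
        = (if a ∈ T then 1 else 0) + (if b ∈ T then 1 else 0) := by
      simp only [endCount, Sym2.lift_mk]
      rw [← sum_ite_mem T a, ← sum_ite_mem T b, ← Finset.sum_add_distrib]
      exact Finset.sum_congr rfl fun v _ => by split_ifs <;> simp
    rw [hsum]
    by_cases haS : a ∈ S
    · have hne : ¬ ∃ x ∈ (S ∪ T)ᶜ, ∃ y ∈ T, s(a, b) = s(x, y) := by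
        rintro ⟨x, hx, y, hy, hxy⟩
        rcases Sym2.eq_iff.mp hxy with ⟨rfl, rfl⟩ | ⟨rfl, rfl⟩
        · exact hx (Or.inl haS)
        · exact Set.disjoint_left.mp hST haS hy
      rw [if_neg (fun h => (h a haS) (Sym2.mem_mk_left a b)), if_neg hne]
    · by_cases hbS : b ∈ S
      · have hne : ¬ ∃ x ∈ (S ∪ T)ᶜ, ∃ y ∈ T, s(a, b) = s(x, y) := by
          rintro ⟨x, hx, y, hy, hxy⟩
          rcases Sym2.eq_iff.mp hxy with ⟨rfl, rfl⟩ | ⟨rfl, rfl⟩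
          · exact Set.disjoint_left.mp hST hbS hy
          · exact hx (Or.inl hbS)
        rw [if_neg (fun h => (h b hbS) (Sym2.mem_mk_right a b)), if_neg hne]
      · have hA : ∀ u ∈ S, ¬ u ∈ s(a, b) := by
          intro u hu hmem
          rcases Sym2.mem_iff.mp hmem with rfl | rfl
          · exact haS hu
          · exact hbS hu
        rw [if_pos hA]
        by_cases haT : a ∈ T <;> by_cases hbT : b ∈ T
        · have hne : ¬ ∃ x ∈ (S ∪ T)ᶜ, ∃ y ∈ T, s(a, b) = s(x, y) := by
            rintro ⟨x, hx, y, hy, hxy⟩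
            rcases Sym2.eq_iff.mp hxy with ⟨rfl, -⟩ | ⟨-, rfl⟩
            · exact hx (Or.inr haT)
            · exact hx (Or.inr hbT)
          rw [if_pos haT, if_pos hbT, if_neg hne]
          push_cast
          decide
        · rw [if_pos haT, if_neg hbT,
            if_pos ⟨b, fun h => h.elim hbS hbT, a, haT, Sym2.eq_swap⟩]
        · rw [if_neg haT, if_pos hbT, if_pos ⟨a, fun h => h.elim haS haT, b, hbT, rfl⟩]
        · have hne : ¬ ∃ x ∈ (S ∪ T)ᶜ, ∃ y ∈ T, s(a, b) = s(x, y) := by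
            rintro ⟨x, hx, y, hy, hxy⟩
            rcases Sym2.eq_iff.mp hxy with ⟨-, rfl⟩ | ⟨rfl, -⟩
            · exact hbT hy
            · exact haT hy
          rw [if_neg haT, if_neg hbT, if_neg hne]

lemma step_A [Fintype V] [Fintype E] (G : Multigraph V E) (S T : Set V)
    (hST : Disjoint S T) :
    (G.degSumAvoid S T : ZMod 2) = (G.edgesBetween ((S ∪ T)ᶜ) T : ZMod 2) := by
  have h1 : G.degSumAvoid S T = ∑ e : E,
      (if ∀ u ∈ S, ¬ u ∈ G.inc e then
        ∑ v : V, (if v ∈ T then endCount v (G.inc e) else 0) else 0) := by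
    have h2 : ∀ v : V, (if v ∈ T then G.degreeAvoid S v else 0)
        = ∑ e : E, (if ∀ u ∈ S, ¬ u ∈ G.inc e then
            (if v ∈ T then endCount v (G.inc e) else 0) else 0) := by
      intro v
      by_cases h : v ∈ T
      · rw [if_pos h, degreeAvoid]
        exact Finset.sum_congr rfl fun e _ => by rw [if_pos h]; exact ite_inst _ _ _ _ _
      · rw [if_neg h]
        simp [h]
    rw [degSumAvoid]
    simp_rw [h2]
    rw [Finset.sum_comm]
    refine Finset.sum_congr rfl fun e _ => ?_
    split_ifs with h
    · rfl
    · simp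
  rw [h1, edgesBetween_eq_card, Finset.card_filter, Nat.cast_sum, Nat.cast_sum]
  refine Finset.sum_congr rfl fun e _ => (edge_contrib hST (G.inc e)).trans ?_
  rw [ite_inst]

lemma step_B [Fintype V] [Fintype E] (G : Multigraph V E) (S T : Set V)
    (hST : Disjoint S T) :
    (G.edgesBetween ((S ∪ T)ᶜ) T : ZMod 2) = (G.oddComps S T : ZMod 2) := by
  classical
  let R : Set V := (S ∪ T)ᶜ
  let φ : E → Set V := fun e =>
    {w | ∃ a b, a ∈ R ∧ b ∈ T ∧ G.inc e = s(a, b) ∧ G.ReachIn R a w}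
  let s : Finset E := Finset.univ.filter (fun e => ∃ a ∈ R, ∃ b ∈ T, G.inc e = s(a, b))
  let comps : Finset (Set V) := Finset.univ.filter (G.IsCompOf R)
  have hφ_eq : ∀ (e : E), ∀ a ∈ R, ∀ b ∈ T, G.inc e = s(a, b) →
      φ e = G.componentIn R a := by
    intro e a ha b hb hab
    ext w
    constructor
    · rintro ⟨a', b', ha', hb', hab', hr⟩
      obtain ⟨rfl, -⟩ := endpoint_unique ha hb ha' hb' (hab.symm.trans hab')
      exact hr
    · intro hw
      exact ⟨a, b, ha, hb, hab, hw⟩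
  have hmaps : ∀ e ∈ s, φ e ∈ comps := by
    intro e he
    rw [Finset.mem_filter] at he
    obtain ⟨-, a, ha, b, hb, hab⟩ := he
    exact Finset.mem_filter.mpr ⟨Finset.mem_univ _, a, ha, hφ_eq e a ha b hb hab⟩
  have hcard : s.card = ∑ C ∈ comps, (s.filter (fun e => φ e = C)).card :=
    Finset.card_eq_sum_card_fiberwise hmaps
  have hfiber : ∀ C ∈ comps, (s.filter (fun e => φ e = C)).card = G.edgesBetween C T := by
    intro C hC
    rw [Finset.mem_filter] at hC
    obtain ⟨-, v, hv, rfl⟩ := hC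
    rw [edgesBetween_eq_card]
    congr 1
    rw [Finset.filter_filter]
    ext e
    simp only [Finset.mem_filter, Finset.mem_univ, true_and]
    constructor
    · rintro ⟨⟨a, ha, b, hb, hab⟩, hφe⟩
      refine ⟨a, ?_, b, hb, hab⟩
      rw [← hφe, hφ_eq e a ha b hb hab]
      exact Relation.ReflTransGen.refl
    · rintro ⟨a, haC, b, hb, hab⟩
      have ha : a ∈ R := mem_of_reachIn hv haC
      exact ⟨⟨a, ha, b, hb, hab⟩,
        by rw [hφ_eq e a ha b hb hab]; exact componentIn_eq_of_mem haC⟩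
  have h0 : G.edgesBetween ((S ∪ T)ᶜ) T = s.card :=
    (edgesBetween_eq_card G ((S ∪ T)ᶜ) T).trans (congrArg Finset.card (filter_inst _ _ _ _))
  have hodd : G.oddComps S T
      = (comps.filter (fun C => Odd (G.edgesBetween C T))).card := by
    rw [oddComps, Nat.card_eq_fintype_card, Fintype.card_subtype, Finset.filter_filter]
  have hsum : (∑ C ∈ comps, (s.filter (fun e => φ e = C)).card)
      = ∑ C ∈ comps, G.edgesBetween C T := Finset.sum_congr rfl hfiber
  rw [h0, hcard, hsum, hodd, Finset.card_filter, Nat.cast_sum, Nat.cast_sum]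
  apply Finset.sum_congr rfl
  intro C _
  rw [← ZMod.natCast_mod (G.edgesBetween C T) 2]
  rcases Nat.even_or_odd (G.edgesBetween C T) with h | h
  · rw [Nat.even_iff.mp h, if_neg (by simp [Nat.odd_iff, Nat.even_iff.mp h])]
  · rw [Nat.odd_iff.mp h, if_pos h]

end Multigraph

open Multigraph in
theorem oddComps_parity
    {V E : Type} [Fintype V] [Fintype E] (G : Multigraph V E)
    (S T : Set V) (hST : Disjoint S T) :
    G.oddComps S T % 2 = G.degSumAvoid S T % 2 := by
  have h : (G.oddComps S T : ZMod 2) = (G.degSumAvoid S T : ZMod 2) :=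
    (step_B G S T hST).symm.trans (step_A G S T hST).symm
  exact (ZMod.natCast_eq_natCast_iff' _ _ _).mp h
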